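/- Let f : ℤ_N → ℂ be nonzero and let f̂(m) = N^{-1/2} Σ_{t∈ℤ_N} f(t) exp(-2πimt/N). Then |supp(f)| · |supp(f̂)| ≥ N. -/

import Mathlib

open scoped BigOperators Classical
noncomputable section

/-- One-dimensional discrete Fourier transform on ℤ_N with unitary normalization. -/
def dft1 (N : ℕ) [NeZero N] (f : ZMod N → ℂ) : ZMod N → ℂ :=
  fun m => ((1 / Real.sqrt N : ℝ) : ℂ) *
    ∑ t : ZMod N, f t *
      Complex.exp (-2 * Real.pi * Complex.I * (((m.val * t.val : ℕ) : ℂ) / (N : ℂ)))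

open ZMod in
lemma dft1_eq_dft (N : ℕ) [NeZero N] (f : ZMod N → ℂ) (m : ZMod N) :
    dft1 N f m = ((1 / Real.sqrt N : ℝ) : ℂ) * ZMod.dft f m := by
  rw [dft1, ZMod.dft_apply]
  congr 1
  refine Finset.sum_congr rfl fun t _ => ?_
  have h1 : -(t * m) = ((-(m.val * t.val : ℕ) : ℤ) : ZMod N) := by
    push_cast [ZMod.natCast_val, ZMod.cast_id]
    ring
  rw [smul_eq_mul, mul_comm, h1, ZMod.stdAddChar_coe]
  congr 1
  push_cast
  ring

/-- Discrete uncertainty principle: `|supp f| * |supp f̂| ≥ N` for nonzero `f : ℤ_N → ℂ`. -/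
theorem one_dim_uncertainty (N : ℕ) [NeZero N] (f : ZMod N → ℂ) (hf : f ≠ 0) :
    N ≤
      (Finset.univ.filter fun t : ZMod N => f t ≠ 0).card *
      (Finset.univ.filter fun m : ZMod N => dft1 N f m ≠ 0).card := by
  classical
  set A := Finset.univ.filter fun t : ZMod N => f t ≠ 0 with hA
  set B := Finset.univ.filter fun m : ZMod N => dft1 N f m ≠ 0 with hB
  set g : ZMod N → ℂ := ZMod.dft f with hg
  have hsqrt : (Real.sqrt N : ℝ) ≠ 0 := by
    have : (0:ℝ) < N := by exact_mod_cast (Nat.pos_of_ne_zero (NeZero.ne N))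
    positivity
  have hc : ((1 / Real.sqrt N : ℝ) : ℂ) ≠ 0 := by
    simp [hsqrt]
  -- B is the support of g
  have hBg : ∀ m, m ∈ B ↔ g m ≠ 0 := by
    intro m
    simp only [hB, Finset.mem_filter, Finset.mem_univ, true_and, dft1_eq_dft, hg,
      mul_ne_zero_iff]
    exact and_iff_right hc
  -- max of ‖f‖
  obtain ⟨t0, -, ht0⟩ := Finset.exists_max_image Finset.univ (fun t => ‖f t‖)
    ⟨0, Finset.mem_univ 0⟩
  have hMpos : 0 < ‖f t0‖ := by
    obtain ⟨t, ht⟩ := Function.ne_iff.mp hf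
    calc 0 < ‖f t‖ := by simpa [norm_pos_iff] using ht
      _ ≤ ‖f t0‖ := ht0 t (Finset.mem_univ t)
  -- each value of g is bounded by |A| * ‖f t0‖
  have hgb : ∀ k, ‖g k‖ ≤ (A.card : ℝ) * ‖f t0‖ := by
    intro k
    rw [hg, ZMod.dft_apply]
    calc ‖∑ j : ZMod N, ZMod.stdAddChar (-(j * k)) • f j‖
        ≤ ∑ j : ZMod N, ‖ZMod.stdAddChar (-(j * k)) • f j‖ := norm_sum_le _ _
      _ = ∑ j : ZMod N, ‖f j‖ := by
          refine Finset.sum_congr rfl fun j _ => ?_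
          rw [smul_eq_mul, norm_mul, ZMod.stdAddChar_apply]
          rw [Circle.norm_coe, one_mul]
      _ = ∑ j ∈ A, ‖f j‖ := by
          refine (Finset.sum_subset (Finset.filter_subset _ _) ?_).symm
          intro j _ hj
          simp only [hA, Finset.mem_filter, Finset.mem_univ, true_and, not_not] at hj
          simp [hj]
      _ ≤ ∑ _j ∈ A, ‖f t0‖ :=
          Finset.sum_le_sum fun j _ => ht0 j (Finset.mem_univ j)
      _ = (A.card : ℝ) * ‖f t0‖ := by simp [mul_comm]
  -- inversion bound
  have key : (N : ℝ) * ‖f t0‖ ≤ (B.card : ℝ) * ((A.card : ℝ) * ‖f t0‖) := by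
    have hinv : ZMod.dft g (-t0) = (N : ℂ) • f t0 := by
      rw [hg]
      have := congrFun (ZMod.dft_dft f) (-t0)
      simpa using this
    calc (N : ℝ) * ‖f t0‖ = ‖ZMod.dft g (-t0)‖ := by
          rw [hinv, norm_smul]
          simp
      _ ≤ ∑ k : ZMod N, ‖ZMod.stdAddChar (-(k * (-t0))) • g k‖ := by
          rw [ZMod.dft_apply]; exact norm_sum_le _ _
      _ = ∑ k : ZMod N, ‖g k‖ := by
          refine Finset.sum_congr rfl fun k _ => ?_
          rw [smul_eq_mul, norm_mul, ZMod.stdAddChar_apply]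
          rw [Circle.norm_coe, one_mul]
      _ = ∑ k ∈ B, ‖g k‖ := by
          refine (Finset.sum_subset (Finset.filter_subset _ _) ?_).symm
          intro k _ hk
          have : ¬ g k ≠ 0 := fun h => hk ((hBg k).mpr h)
          simp [not_not.mp this]
      _ ≤ ∑ _k ∈ B, (A.card : ℝ) * ‖f t0‖ :=
          Finset.sum_le_sum fun k _ => hgb k
      _ = (B.card : ℝ) * ((A.card : ℝ) * ‖f t0‖) := by simp [mul_comm]
  have : (N : ℝ) ≤ (A.card : ℝ) * (B.card : ℝ) := by
    have h := key
    rw [mul_comm (B.card : ℝ), mul_assoc] at h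
    nlinarith
  exact_mod_cast this
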